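/- Let f, g : [0,1]² → [0,1] be symmetric measurable functions (graphons) and let π* be an optimal coupling achieving GW₂²(f,g) = ∬ (f(x,x') − g(y,y'))² dπ*(x,y) dπ*(x',y'), where π* is a probability measure on [0,1]² with both marginals equal to Lebesgue measure on [0,1]. Define g̃(y,y') = ∬ π*(y,x) f(x,x') π*(x',y') dx dx' (where π* is identified with its density). Then ∫₀¹∫₀¹ (g̃(y,y') − g(y,y'))² dy dy' ≤ GW₂²(f,g). -/

import Mathlib

open MeasureTheory

set_option maxHeartbeats 1000000

/-- The coordinate permutation `((x,y),(x',y')) ↦ ((y,y'),(x,x'))` as a measurable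
equivalence of `(ℝ × ℝ) × (ℝ × ℝ)`. -/
noncomputable def graphonPerm : (ℝ × ℝ) × (ℝ × ℝ) ≃ᵐ (ℝ × ℝ) × (ℝ × ℝ) :=
  ((MeasurableEquiv.prodComm : ℝ × ℝ ≃ᵐ ℝ × ℝ).prodCongr
      (MeasurableEquiv.prodComm : ℝ × ℝ ≃ᵐ ℝ × ℝ)).trans <|
    (MeasurableEquiv.prodAssoc).trans <|
      ((MeasurableEquiv.refl ℝ).prodCongr
        ((MeasurableEquiv.prodAssoc.symm).trans
          (((MeasurableEquiv.prodComm : ℝ × ℝ ≃ᵐ ℝ × ℝ).prodCongr (MeasurableEquiv.refl ℝ)).trans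
            MeasurableEquiv.prodAssoc))).trans
        MeasurableEquiv.prodAssoc.symm

lemma graphonPerm_apply (z : (ℝ × ℝ) × (ℝ × ℝ)) :
    graphonPerm z = ((z.1.2, z.2.2), (z.1.1, z.2.1)) := rfl

lemma graphonPerm_measurePreserving (μ : Measure ℝ) [SigmaFinite μ] :
    MeasurePreserving graphonPerm ((μ.prod μ).prod (μ.prod μ)) ((μ.prod μ).prod (μ.prod μ)) := by
  have hswap : MeasurePreserving (Prod.swap) (μ.prod μ) (μ.prod μ) :=
    Measure.measurePreserving_swap
  have hinner : MeasurePreserving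
      ((MeasurableEquiv.prodAssoc.symm).trans
          (((MeasurableEquiv.prodComm : ℝ × ℝ ≃ᵐ ℝ × ℝ).prodCongr (MeasurableEquiv.refl ℝ)).trans
            MeasurableEquiv.prodAssoc))
      (μ.prod (μ.prod μ)) (μ.prod (μ.prod μ)) :=
    (MeasureTheory.measurePreserving_prodAssoc μ μ μ).comp
      ((hswap.prod (MeasurePreserving.id μ)).comp
        ((MeasureTheory.measurePreserving_prodAssoc μ μ μ).symm MeasurableEquiv.prodAssoc))
  exact ((MeasureTheory.measurePreserving_prodAssoc μ μ (μ.prod μ)).symm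
      MeasurableEquiv.prodAssoc).comp <|
    (((MeasurePreserving.id μ).prod hinner).comp
      (MeasureTheory.measurePreserving_prodAssoc μ μ (μ.prod μ))).comp
      (hswap.prod hswap)

/-- alignment bound for graphons. `f g : [0,1]² → [0,1]` are
graphons (symmetric measurable), `p` is the density of a coupling `π*` of
Lebesgue measure on `[0,1]` with itself (nonnegative, both marginals uniform),
and `GW₂²(f,g)` is achieved by `π*`, i.e. equals the quadruple integral
`∬∬ (f(x,x') − g(y,y'))² p(x,y) p(x',y') dx dy dx' dy'`. With
`g̃(y,y') = ∬ p(x,y) f(x,x') p(x',y') dx dx'`, one has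
`‖g̃ − g‖₂² ≤ GW₂²(f,g)`. -/
theorem graphon_alignment_bound
    (f g p : ℝ → ℝ → ℝ)
    (hf : Measurable fun q : ℝ × ℝ => f q.1 q.2)
    (hg : Measurable fun q : ℝ × ℝ => g q.1 q.2)
    (hp : Measurable fun q : ℝ × ℝ => p q.1 q.2)
    (hfsym : ∀ x y, f x y = f y x)
    (hgsym : ∀ x y, g x y = g y x)
    (hf01 : ∀ x ∈ Set.Icc (0:ℝ) 1, ∀ y ∈ Set.Icc (0:ℝ) 1, f x y ∈ Set.Icc (0:ℝ) 1)
    (hg01 : ∀ x ∈ Set.Icc (0:ℝ) 1, ∀ y ∈ Set.Icc (0:ℝ) 1, g x y ∈ Set.Icc (0:ℝ) 1)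
    (hppos : ∀ x ∈ Set.Icc (0:ℝ) 1, ∀ y ∈ Set.Icc (0:ℝ) 1, 0 ≤ p x y)
    (hmarg1 : ∀ x ∈ Set.Icc (0:ℝ) 1, ∫ y in Set.Icc (0:ℝ) 1, p x y = 1)
    (hmarg2 : ∀ y ∈ Set.Icc (0:ℝ) 1, ∫ x in Set.Icc (0:ℝ) 1, p x y = 1) :
    (∫ y in Set.Icc (0:ℝ) 1, ∫ y' in Set.Icc (0:ℝ) 1,
        ((∫ x in Set.Icc (0:ℝ) 1, ∫ x' in Set.Icc (0:ℝ) 1,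
            p x y * f x x' * p x' y') - g y y') ^ 2) ≤
      ∫ x in Set.Icc (0:ℝ) 1, ∫ y in Set.Icc (0:ℝ) 1,
        ∫ x' in Set.Icc (0:ℝ) 1, ∫ y' in Set.Icc (0:ℝ) 1,
          (f x x' - g y y') ^ 2 * (p x y * p x' y') := by
  set I : Set ℝ := Set.Icc (0:ℝ) 1 with hIdef
  have hI : MeasurableSet I := measurableSet_Icc
  set μ : Measure ℝ := volume.restrict I with hμdef
  haveI : IsProbabilityMeasure μ := by
    constructor
    rw [hμdef, Measure.restrict_apply_univ, hIdef, Real.volume_Icc]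
    norm_num
  set ρ : Measure (ℝ × ℝ) := μ.prod μ with hρdef
  set Ω : Measure ((ℝ × ℝ) × (ℝ × ℝ)) := ρ.prod ρ with hΩdef
  have haeμ : ∀ᵐ x ∂μ, x ∈ I := ae_restrict_mem hI
  have hρr : ρ = (volume.prod volume).restrict (I ×ˢ I) := by
    rw [hρdef, hμdef, Measure.prod_restrict]
  have haeρ : ∀ᵐ z ∂ρ, z.1 ∈ I ∧ z.2 ∈ I := by
    rw [hρr]
    filter_upwards [ae_restrict_mem (hI.prod hI)] with z hz
    simpa [Set.mem_prod] using hz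
  have hΩr : Ω = ((volume.prod volume).prod (volume.prod volume)).restrict
      ((I ×ˢ I) ×ˢ (I ×ˢ I)) := by
    rw [hΩdef, hρr, Measure.prod_restrict]
  have haeΩ : ∀ᵐ z ∂Ω, (z.1.1 ∈ I ∧ z.1.2 ∈ I) ∧ (z.2.1 ∈ I ∧ z.2.2 ∈ I) := by
    rw [hΩr]
    filter_upwards [ae_restrict_mem ((hI.prod hI).prod (hI.prod hI))] with z hz
    simpa [Set.mem_prod] using hz
  -- slice measurability
  have hpx : ∀ y, Measurable fun x => p x y := fun y =>
    hp.comp (measurable_id.prodMk measurable_const)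
  -- slice integrability
  have hint1 : ∀ x ∈ I, Integrable (fun y => p x y) μ := by
    intro x hx
    by_contra hcon
    have h1 := hmarg1 x hx
    rw [integral_undef hcon] at h1
    norm_num at h1
  have hint2 : ∀ y ∈ I, Integrable (fun x => p x y) μ := by
    intro y hy
    by_contra hcon
    have h1 := hmarg2 y hy
    rw [integral_undef hcon] at h1
    norm_num at h1
  have hpnn1 : ∀ x ∈ I, (0:ℝ → ℝ) ≤ᵐ[μ] fun y => p x y := by
    intro x hx
    filter_upwards [haeμ] with y hy using hppos x hx y hy
  -- p is integrable on the product
  have hPρ : Integrable (fun z : ℝ × ℝ => p z.1 z.2) ρ := by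
    refine ⟨hp.aestronglyMeasurable, ?_⟩
    have hnn : (0:ℝ × ℝ → ℝ) ≤ᵐ[ρ] fun z : ℝ × ℝ => p z.1 z.2 := by
      filter_upwards [haeρ] with z hz using hppos _ hz.1 _ hz.2
    rw [hasFiniteIntegral_iff_ofReal hnn, hρdef,
      lintegral_prod _ (hp.ennreal_ofReal.aemeasurable)]
    have hone : ∀ᵐ x ∂μ, ∫⁻ y, ENNReal.ofReal (p x y) ∂μ = 1 := by
      filter_upwards [haeμ] with x hx
      rw [← ofReal_integral_eq_lintegral_ofReal (hint1 x hx) (hpnn1 x hx), hmarg1 x hx,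
        ENNReal.ofReal_one]
    rw [lintegral_congr_ae hone, lintegral_one, measure_univ]
    norm_num
  have hPint : ∫ X : ℝ × ℝ, p X.1 X.2 ∂ρ = 1 := by
    rw [hρdef, integral_prod _ hPρ]
    have hone : ∀ᵐ x ∂μ, (∫ y, p x y ∂μ) = 1 := by
      filter_upwards [haeμ] with x hx using hmarg1 x hx
    rw [integral_congr_ae hone, integral_const, probReal_univ]
    norm_num
  -- weights
  have hwInt : ∀ y ∈ I, ∀ y' ∈ I,
      Integrable (fun X : ℝ × ℝ => p X.1 y * p X.2 y') ρ := fun y hy y' hy' =>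
    (hint2 y hy).mul_prod (hint2 y' hy')
  have hwIntegral : ∀ y ∈ I, ∀ y' ∈ I,
      (∫ X : ℝ × ℝ, p X.1 y * p X.2 y' ∂ρ) = 1 := by
    intro y hy y' hy'
    rw [hρdef]
    rw [show (∫ X : ℝ × ℝ, p X.1 y * p X.2 y' ∂μ.prod μ)
        = (∫ x, p x y ∂μ) * (∫ x, p x y' ∂μ) from integral_prod_mul (fun x => p x y) (fun x => p x y'),
      hmarg2 y hy, hmarg2 y' hy']
    norm_num
  have hwnn : ∀ y ∈ I, ∀ y' ∈ I,
      (0:ℝ × ℝ → ℝ) ≤ᵐ[ρ] fun X : ℝ × ℝ => p X.1 y * p X.2 y' := by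
    intro y hy y' hy'
    filter_upwards [haeρ] with z hz using
      mul_nonneg (hppos _ hz.1 _ hy) (hppos _ hz.2 _ hy')
  have hmw : ∀ y y' : ℝ, Measurable fun X : ℝ × ℝ => p X.1 y * p X.2 y' := fun y y' =>
    ((hpx y).comp measurable_fst).mul ((hpx y').comp measurable_snd)
  -- integrability of the various products with the weight
  have hφ2wInt : ∀ y ∈ I, ∀ y' ∈ I,
      Integrable (fun X : ℝ × ℝ => (f X.1 X.2 - g y y') ^ 2 * (p X.1 y * p X.2 y')) ρ := by
    intro y hy y' hy'
    refine (hwInt y hy y' hy').mono'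
      (((hf.sub measurable_const).pow_const 2).mul (hmw y y')).aestronglyMeasurable ?_
    filter_upwards [haeρ] with z hz
    obtain ⟨h0, h1⟩ := hf01 _ hz.1 _ hz.2
    obtain ⟨hc0, hc1⟩ := hg01 y hy y' hy'
    have hw0 : 0 ≤ p z.1 y * p z.2 y' := mul_nonneg (hppos _ hz.1 _ hy) (hppos _ hz.2 _ hy')
    have hb : (f z.1 z.2 - g y y') ^ 2 ≤ 1 := by nlinarith
    rw [Real.norm_eq_abs, abs_of_nonneg (mul_nonneg (sq_nonneg _) hw0)]
    nlinarith
  have hφwInt : ∀ y ∈ I, ∀ y' ∈ I,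
      Integrable (fun X : ℝ × ℝ => (f X.1 X.2 - g y y') * (p X.1 y * p X.2 y')) ρ := by
    intro y hy y' hy'
    refine (hwInt y hy y' hy').mono'
      ((hf.sub measurable_const).mul (hmw y y')).aestronglyMeasurable ?_
    filter_upwards [haeρ] with z hz
    obtain ⟨h0, h1⟩ := hf01 _ hz.1 _ hz.2
    obtain ⟨hc0, hc1⟩ := hg01 y hy y' hy'
    have hw0 : 0 ≤ p z.1 y * p z.2 y' := mul_nonneg (hppos _ hz.1 _ hy) (hppos _ hz.2 _ hy')
    rw [Real.norm_eq_abs, abs_mul, abs_of_nonneg hw0]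
    have hb : |f z.1 z.2 - g y y'| ≤ 1 := by rw [abs_le]; constructor <;> linarith
    nlinarith [abs_nonneg (f z.1 z.2 - g y y')]
  have hfwInt : ∀ y ∈ I, ∀ y' ∈ I,
      Integrable (fun X : ℝ × ℝ => f X.1 X.2 * (p X.1 y * p X.2 y')) ρ := by
    intro y hy y' hy'
    refine (hwInt y hy y' hy').mono' (hf.mul (hmw y y')).aestronglyMeasurable ?_
    filter_upwards [haeρ] with z hz
    obtain ⟨h0, h1⟩ := hf01 _ hz.1 _ hz.2
    have hw0 : 0 ≤ p z.1 y * p z.2 y' := mul_nonneg (hppos _ hz.1 _ hy) (hppos _ hz.2 _ hy')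
    rw [Real.norm_eq_abs, abs_mul, abs_of_nonneg hw0, abs_of_nonneg h0]
    nlinarith
  have hpfpInt : ∀ y ∈ I, ∀ y' ∈ I,
      Integrable (fun X : ℝ × ℝ => p X.1 y * f X.1 X.2 * p X.2 y') ρ := by
    intro y hy y' hy'
    have : (fun X : ℝ × ℝ => p X.1 y * f X.1 X.2 * p X.2 y')
        = fun X : ℝ × ℝ => f X.1 X.2 * (p X.1 y * p X.2 y') := by
      funext X; ring
    rw [this]
    exact hfwInt y hy y' hy'
  -- the pointwise Jensen inequality
  have key : ∀ y ∈ I, ∀ y' ∈ I,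
      ((∫ X : ℝ × ℝ, p X.1 y * f X.1 X.2 * p X.2 y' ∂ρ) - g y y') ^ 2 ≤
        ∫ X : ℝ × ℝ, (f X.1 X.2 - g y y') ^ 2 * (p X.1 y * p X.2 y') ∂ρ := by
    intro y hy y' hy'
    set m := ∫ X : ℝ × ℝ, (f X.1 X.2 - g y y') * (p X.1 y * p X.2 y') ∂ρ with hm
    have h0 : 0 ≤ ∫ X : ℝ × ℝ, (f X.1 X.2 - g y y' - m) ^ 2 * (p X.1 y * p X.2 y') ∂ρ := by
      apply integral_nonneg_of_ae
      filter_upwards [hwnn y hy y' hy'] with z hz using mul_nonneg (sq_nonneg _) hz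
    have hexp : ∫ X : ℝ × ℝ, (f X.1 X.2 - g y y' - m) ^ 2 * (p X.1 y * p X.2 y') ∂ρ
        = (∫ X : ℝ × ℝ, (f X.1 X.2 - g y y') ^ 2 * (p X.1 y * p X.2 y') ∂ρ) - 2 * m * m
            + m ^ 2 := by
      have hre : (fun X : ℝ × ℝ => (f X.1 X.2 - g y y' - m) ^ 2 * (p X.1 y * p X.2 y'))
          = fun X : ℝ × ℝ =>
            ((f X.1 X.2 - g y y') ^ 2 * (p X.1 y * p X.2 y')
              - (2 * m) * ((f X.1 X.2 - g y y') * (p X.1 y * p X.2 y'))) +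
              (m ^ 2) * (p X.1 y * p X.2 y') := by
        funext X; ring
      have hB : Integrable (fun X : ℝ × ℝ =>
          (2 * m) * ((f X.1 X.2 - g y y') * (p X.1 y * p X.2 y'))) ρ :=
        (hφwInt y hy y' hy').const_mul _
      have hC : Integrable (fun X : ℝ × ℝ => (m ^ 2) * (p X.1 y * p X.2 y')) ρ :=
        (hwInt y hy y' hy').const_mul _
      have hA : Integrable (fun X : ℝ × ℝ =>
          (f X.1 X.2 - g y y') ^ 2 * (p X.1 y * p X.2 y')
            - (2 * m) * ((f X.1 X.2 - g y y') * (p X.1 y * p X.2 y'))) ρ :=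
        (hφ2wInt y hy y' hy').sub hB
      rw [hre, integral_add hA hC, integral_sub (hφ2wInt y hy y' hy') hB,
        integral_const_mul, integral_const_mul, hwIntegral y hy y' hy', ← hm]
      ring
    have hmeq : m = (∫ X : ℝ × ℝ, p X.1 y * f X.1 X.2 * p X.2 y' ∂ρ) - g y y' := by
      have hre : (fun X : ℝ × ℝ => (f X.1 X.2 - g y y') * (p X.1 y * p X.2 y'))
          = fun X : ℝ × ℝ => f X.1 X.2 * (p X.1 y * p X.2 y')
              - (g y y') * (p X.1 y * p X.2 y') := by
        funext X; ring
      have hre2 : (fun X : ℝ × ℝ => f X.1 X.2 * (p X.1 y * p X.2 y'))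
          = fun X : ℝ × ℝ => p X.1 y * f X.1 X.2 * p X.2 y' := by
        funext X; ring
      have hB : Integrable (fun X : ℝ × ℝ => (g y y') * (p X.1 y * p X.2 y')) ρ :=
        (hwInt y hy y' hy').const_mul _
      rw [hm, hre, integral_sub (hfwInt y hy y' hy') hB,
        integral_const_mul, hwIntegral y hy y' hy', hre2]
      ring
    rw [← hmeq]
    rw [hexp] at h0
    nlinarith [h0]
  -- the four-variable integrands
  set H : (ℝ × ℝ) × (ℝ × ℝ) → ℝ :=
    fun z => (f z.1.1 z.2.1 - g z.1.2 z.2.2) ^ 2 * (p z.1.1 z.1.2 * p z.2.1 z.2.2) with hHdef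
  set F : (ℝ × ℝ) × (ℝ × ℝ) → ℝ :=
    fun z => (f z.2.1 z.2.2 - g z.1.1 z.1.2) ^ 2 * (p z.2.1 z.1.1 * p z.2.2 z.1.2) with hFdef
  have hHmeas : Measurable H := by
    rw [hHdef]
    exact (((hf.comp ((measurable_fst.fst).prodMk (measurable_snd.fst))).sub
        (hg.comp ((measurable_fst.snd).prodMk (measurable_snd.snd)))).pow_const 2).mul
      (((hp.comp ((measurable_fst.fst).prodMk (measurable_fst.snd)))).mul
        ((hp.comp ((measurable_snd.fst).prodMk (measurable_snd.snd)))))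
  have hFmeas : Measurable F := by
    rw [hFdef]
    exact (((hf.comp ((measurable_snd.fst).prodMk (measurable_snd.snd))).sub
        (hg.comp ((measurable_fst.fst).prodMk (measurable_fst.snd)))).pow_const 2).mul
      (((hp.comp ((measurable_snd.fst).prodMk (measurable_fst.fst)))).mul
        ((hp.comp ((measurable_snd.snd).prodMk (measurable_fst.snd)))))
  have hFH : ∀ z : (ℝ × ℝ) × (ℝ × ℝ), F (graphonPerm z) = H z := by
    intro z
    rw [graphonPerm_apply]
  have hHInt : Integrable H Ω := by
    have hPP : Integrable (fun z : (ℝ × ℝ) × (ℝ × ℝ) => p z.1.1 z.1.2 * p z.2.1 z.2.2) Ω :=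
      hPρ.mul_prod hPρ
    refine hPP.mono' hHmeas.aestronglyMeasurable ?_
    filter_upwards [haeΩ] with z hz
    obtain ⟨⟨hx, hy⟩, hx', hy'⟩ := hz
    obtain ⟨h0, h1⟩ := hf01 _ hx _ hx'
    obtain ⟨hc0, hc1⟩ := hg01 _ hy _ hy'
    have hw0 : 0 ≤ p z.1.1 z.1.2 * p z.2.1 z.2.2 :=
      mul_nonneg (hppos _ hx _ hy) (hppos _ hx' _ hy')
    have hb : (f z.1.1 z.2.1 - g z.1.2 z.2.2) ^ 2 ≤ 1 := by nlinarith
    rw [hHdef]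
    rw [Real.norm_eq_abs, abs_of_nonneg (mul_nonneg (sq_nonneg _) hw0)]
    calc (f z.1.1 z.2.1 - g z.1.2 z.2.2) ^ 2 * (p z.1.1 z.1.2 * p z.2.1 z.2.2)
        ≤ 1 * (p z.1.1 z.1.2 * p z.2.1 z.2.2) := mul_le_mul_of_nonneg_right hb hw0
      _ = p z.1.1 z.1.2 * p z.2.1 z.2.2 := one_mul _
  have hmp := graphonPerm_measurePreserving μ
  have hFInt : Integrable F Ω := by
    refine (hmp.integrable_comp_emb graphonPerm.measurableEmbedding).1 ?_
    have : F ∘ graphonPerm = H := funext hFH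
    rw [this]
    exact hHInt
  have hFHint : ∫ z, F z ∂Ω = ∫ z, H z ∂Ω := by
    rw [← hmp.integral_comp' F]
    exact integral_congr_ae (Filter.Eventually.of_forall fun z => hFH z)
  -- T
  set T : ℝ × ℝ → ℝ := fun Y => ∫ X, F (Y, X) ∂ρ with hTdef
  have hTsm : StronglyMeasurable T := by
    rw [hTdef]
    exact hFmeas.stronglyMeasurable.integral_prod_right'
  have hT0 : ∀ Y : ℝ × ℝ, Y.1 ∈ I → Y.2 ∈ I → 0 ≤ T Y := by
    intro Y hy hy'
    rw [hTdef]
    apply integral_nonneg_of_ae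
    filter_upwards [hwnn Y.1 hy Y.2 hy'] with z hz using mul_nonneg (sq_nonneg _) hz
  have hT1 : ∀ Y : ℝ × ℝ, Y.1 ∈ I → Y.2 ∈ I → T Y ≤ 1 := by
    intro Y hy hy'
    have : T Y = ∫ X : ℝ × ℝ, (f X.1 X.2 - g Y.1 Y.2) ^ 2 * (p X.1 Y.1 * p X.2 Y.2) ∂ρ := rfl
    rw [this, ← hwIntegral Y.1 hy Y.2 hy']
    refine integral_mono_ae (hφ2wInt Y.1 hy Y.2 hy') (hwInt Y.1 hy Y.2 hy') ?_
    filter_upwards [haeρ] with z hz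
    obtain ⟨h0, h1⟩ := hf01 _ hz.1 _ hz.2
    obtain ⟨hc0, hc1⟩ := hg01 Y.1 hy Y.2 hy'
    have hw0 : 0 ≤ p z.1 Y.1 * p z.2 Y.2 :=
      mul_nonneg (hppos _ hz.1 _ hy) (hppos _ hz.2 _ hy')
    have hb : (f z.1 z.2 - g Y.1 Y.2) ^ 2 ≤ 1 := by nlinarith
    calc (f z.1 z.2 - g Y.1 Y.2) ^ 2 * (p z.1 Y.1 * p z.2 Y.2)
        ≤ 1 * (p z.1 Y.1 * p z.2 Y.2) := mul_le_mul_of_nonneg_right hb hw0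
      _ = p z.1 Y.1 * p z.2 Y.2 := one_mul _
  have hTInt : Integrable T ρ := by
    refine (integrable_const (1:ℝ)).mono' hTsm.aestronglyMeasurable ?_
    filter_upwards [haeρ] with z hz
    rw [Real.norm_eq_abs, abs_of_nonneg (hT0 z hz.1 hz.2)]
    exact hT1 z hz.1 hz.2
  have hTslice : ∀ y ∈ I, Integrable (fun y' => T (y, y')) μ := by
    intro y hy
    refine (integrable_const (1:ℝ)).mono'
      (hTsm.comp_measurable measurable_prodMk_left).aestronglyMeasurable ?_
    filter_upwards [haeμ] with y' hy'
    rw [Real.norm_eq_abs, abs_of_nonneg (hT0 (y, y') hy hy')]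
    exact hT1 (y, y') hy hy'
  -- LHS rewrite
  have hL1 : (∫ y, ∫ y', ((∫ x, ∫ x', p x y * f x x' * p x' y' ∂μ ∂μ) - g y y') ^ 2 ∂μ ∂μ)
      = ∫ y, ∫ y', ((∫ X : ℝ × ℝ, p X.1 y * f X.1 X.2 * p X.2 y' ∂ρ) - g y y') ^ 2 ∂μ ∂μ := by
    refine integral_congr_ae ?_
    filter_upwards [haeμ] with y hy
    refine integral_congr_ae ?_
    filter_upwards [haeμ] with y' hy'
    rw [integral_integral (hpfpInt y hy y' hy')]
  -- monotone step
  have hmono : (∫ y, ∫ y', ((∫ X : ℝ × ℝ, p X.1 y * f X.1 X.2 * p X.2 y' ∂ρ) - g y y') ^ 2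
        ∂μ ∂μ) ≤ ∫ y, ∫ y', T (y, y') ∂μ ∂μ := by
    refine integral_mono_of_nonneg ?_ ?_ ?_
    · exact Filter.Eventually.of_forall fun y =>
        integral_nonneg fun y' => sq_nonneg _
    · refine (integrable_const (1:ℝ)).mono'
        (hTsm.integral_prod_right').aestronglyMeasurable ?_
      filter_upwards [haeμ] with y hy
      have h1 : ‖∫ y', T (y, y') ∂μ‖ ≤ ∫ _y' : ℝ, (1:ℝ) ∂μ := by
        refine norm_integral_le_of_norm_le (integrable_const 1) ?_
        filter_upwards [haeμ] with y' hy'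
        rw [Real.norm_eq_abs, abs_of_nonneg (hT0 (y, y') hy hy')]
        exact hT1 (y, y') hy hy'
      simpa using h1
    · filter_upwards [haeμ] with y hy
      refine integral_mono_of_nonneg ?_ (hTslice y hy) ?_
      · exact Filter.Eventually.of_forall fun y' => sq_nonneg _
      · filter_upwards [haeμ] with y' hy'
        exact key y hy y' hy'
  -- S = ∫ F dΩ
  have hS : (∫ y, ∫ y', T (y, y') ∂μ ∂μ) = ∫ z, F z ∂Ω := by
    have h1 : (∫ y, ∫ y', T (y, y') ∂μ ∂μ) = ∫ Y : ℝ × ℝ, T Y ∂ρ :=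
      integral_integral hTInt
    have h2 : (∫ Y : ℝ × ℝ, T Y ∂ρ) = ∫ z, F z ∂Ω :=
      integral_integral (f := fun Y X => F (Y, X)) hFInt
    rw [h1, h2]
  -- RHS rewrite
  have hKsm : StronglyMeasurable fun Z : ℝ × ℝ => ∫ X, H (Z, X) ∂ρ :=
    hHmeas.stronglyMeasurable.integral_prod_right'
  have hH2Int : ∀ x ∈ I, ∀ y ∈ I,
      Integrable (fun X : ℝ × ℝ => H ((x, y), X)) ρ := by
    intro x hx y hy
    refine ((hPρ.const_mul (p x y)).mono'
      ((hHmeas.comp measurable_prodMk_left).aestronglyMeasurable) ?_)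
    filter_upwards [haeρ] with z hz
    obtain ⟨h0, h1⟩ := hf01 _ hx _ hz.1
    obtain ⟨hc0, hc1⟩ := hg01 _ hy _ hz.2
    have hp1 : 0 ≤ p x y := hppos _ hx _ hy
    have hp2 : 0 ≤ p z.1 z.2 := hppos _ hz.1 _ hz.2
    have : H ((x, y), z) = (f x z.1 - g y z.2) ^ 2 * (p x y * p z.1 z.2) := rfl
    have hb : (f x z.1 - g y z.2) ^ 2 ≤ 1 := by nlinarith
    rw [this, Real.norm_eq_abs,
      abs_of_nonneg (mul_nonneg (sq_nonneg _) (mul_nonneg hp1 hp2))]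
    calc (f x z.1 - g y z.2) ^ 2 * (p x y * p z.1 z.2)
        ≤ 1 * (p x y * p z.1 z.2) := mul_le_mul_of_nonneg_right hb (mul_nonneg hp1 hp2)
      _ = p x y * p z.1 z.2 := one_mul _
  have hKInt : Integrable (fun Z : ℝ × ℝ => ∫ X, H (Z, X) ∂ρ) ρ := by
    refine hPρ.mono' hKsm.aestronglyMeasurable ?_
    filter_upwards [haeρ] with Z hZ
    have h1 : ‖∫ X, H (Z, X) ∂ρ‖ ≤ ∫ X : ℝ × ℝ, p Z.1 Z.2 * p X.1 X.2 ∂ρ := by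
      refine norm_integral_le_of_norm_le (hPρ.const_mul (p Z.1 Z.2)) ?_
      filter_upwards [haeρ] with z hz
      obtain ⟨h0, h1⟩ := hf01 _ hZ.1 _ hz.1
      obtain ⟨hc0, hc1⟩ := hg01 _ hZ.2 _ hz.2
      have hp1 : 0 ≤ p Z.1 Z.2 := hppos _ hZ.1 _ hZ.2
      have hp2 : 0 ≤ p z.1 z.2 := hppos _ hz.1 _ hz.2
      have : H (Z, z) = (f Z.1 z.1 - g Z.2 z.2) ^ 2 * (p Z.1 Z.2 * p z.1 z.2) := rfl
      have hb : (f Z.1 z.1 - g Z.2 z.2) ^ 2 ≤ 1 := by nlinarith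
      rw [this, Real.norm_eq_abs,
        abs_of_nonneg (mul_nonneg (sq_nonneg _) (mul_nonneg hp1 hp2))]
      calc (f Z.1 z.1 - g Z.2 z.2) ^ 2 * (p Z.1 Z.2 * p z.1 z.2)
          ≤ 1 * (p Z.1 Z.2 * p z.1 z.2) := mul_le_mul_of_nonneg_right hb (mul_nonneg hp1 hp2)
        _ = p Z.1 Z.2 * p z.1 z.2 := one_mul _
    calc ‖∫ X, H (Z, X) ∂ρ‖ ≤ ∫ X : ℝ × ℝ, p Z.1 Z.2 * p X.1 X.2 ∂ρ := h1
      _ = p Z.1 Z.2 := by rw [integral_const_mul, hPint, mul_one]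
  have hR : (∫ x, ∫ y, ∫ x', ∫ y', (f x x' - g y y') ^ 2 * (p x y * p x' y') ∂μ ∂μ ∂μ ∂μ)
      = ∫ z, H z ∂Ω := by
    have h1 : (∫ x, ∫ y, ∫ x', ∫ y', (f x x' - g y y') ^ 2 * (p x y * p x' y') ∂μ ∂μ ∂μ ∂μ)
        = ∫ x, ∫ y, ∫ X : ℝ × ℝ, H ((x, y), X) ∂ρ ∂μ ∂μ := by
      refine integral_congr_ae ?_
      filter_upwards [haeμ] with x hx
      refine integral_congr_ae ?_
      filter_upwards [haeμ] with y hy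
      exact integral_integral (hH2Int x hx y hy)
    have h2 : (∫ x, ∫ y, ∫ X : ℝ × ℝ, H ((x, y), X) ∂ρ ∂μ ∂μ)
        = ∫ Z : ℝ × ℝ, ∫ X : ℝ × ℝ, H (Z, X) ∂ρ ∂ρ :=
      integral_integral (f := fun x y => ∫ X : ℝ × ℝ, H ((x, y), X) ∂ρ) hKInt
    have h3 : (∫ Z : ℝ × ℝ, ∫ X : ℝ × ℝ, H (Z, X) ∂ρ ∂ρ) = ∫ z, H z ∂Ω :=
      integral_integral (f := fun Z X => H (Z, X)) hHInt
    rw [h1, h2, h3]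
  calc (∫ y, ∫ y', ((∫ x, ∫ x', p x y * f x x' * p x' y' ∂μ ∂μ) - g y y') ^ 2 ∂μ ∂μ)
      = ∫ y, ∫ y', ((∫ X : ℝ × ℝ, p X.1 y * f X.1 X.2 * p X.2 y' ∂ρ) - g y y') ^ 2 ∂μ ∂μ :=
        hL1
    _ ≤ ∫ y, ∫ y', T (y, y') ∂μ ∂μ := hmono
    _ = ∫ z, F z ∂Ω := hS
    _ = ∫ z, H z ∂Ω := hFHint
    _ = ∫ x, ∫ y, ∫ x', ∫ y', (f x x' - g y y') ^ 2 * (p x y * p x' y') ∂μ ∂μ ∂μ ∂μ :=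
        hR.symm
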